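/- Let q be a prime power, n ≥ 1 with gcd(n,q) = 1, and ζ a primitive n-th root of unity in an algebraic closure K of F_q. For every nonzero f ∈ R(F_q,n), the dimension of the ideal C(f) generated by f as an F_q-vector space equals w_H(f̂), the Hamming weight of the Mattson–Solomon vector f̂ = (f(ζ), f(ζ²), …, f(ζ^n)) of the degree-< n representative of f. -/

import Mathlib

open Polynomial

/-- The ring R(F,n) = F[X]/(X^n - 1). -/
abbrev CycRing (F : Type*) [Field F] (n : ℕ) := AdjoinRoot (X ^ n - Polynomial.C (1 : F))

/-- The unique representative of degree < n of an element of F[X]/(X^n-1). -/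
noncomputable def cycRep {F : Type*} [Field F] {n : ℕ} (f : CycRing F n) : F[X] :=
  if h : n = 0 then 0
  else AdjoinRoot.modByMonicHom (monic_X_pow_sub_C (1 : F) h) f

/-- Hamming weight of an element of F[X]/(X^n-1): the number of nonzero coefficients of
its representative of degree < n. -/
noncomputable def cycWt {F : Type*} [Field F] {n : ℕ} (f : CycRing F n) : ℕ :=
  (cycRep f).support.card

/-- Minimum distance of a cyclic code (ideal of F[X]/(X^n-1)). -/
noncomputable def cycDist {F : Type*} [Field F] {n : ℕ} (I : Ideal (CycRing F n)) : ℕ :=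
  sInf {w | ∃ f ∈ I, f ≠ 0 ∧ cycWt f = w}

/-- Dimension of a cyclic code as an F-vector space. -/
noncomputable def cycDim (F : Type*) [Field F] {n : ℕ} (I : Ideal (CycRing F n)) : ℕ :=
  Module.finrank F (Submodule.restrictScalars F I)

/-- The invariant μ(F,n). -/
noncomputable def mu (F : Type*) [Field F] (n : ℕ) : ℕ :=
  sInf {w | ∃ f : CycRing F n, f ≠ 0 ∧
    cycDist (Ideal.span {f}) + cycDim F (Ideal.span {f}) = w}

/-- Hamming weight of a vector: its number of nonzero coordinates. -/
noncomputable def wt {ι α : Type*} [Zero α] (v : ι → α) : ℕ := Set.ncard {i | v i ≠ 0}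

/-- The Mattson–Solomon vector (g(ζ), g(ζ²), …, g(ζⁿ)) of a polynomial g over F. -/
noncomputable def msVecPoly {F : Type*} [Field F] (n : ℕ) (ζ : AlgebraicClosure F)
    (g : Polynomial F) : Fin n → AlgebraicClosure F :=
  fun j => Polynomial.aeval (ζ ^ ((j : ℕ) + 1)) g

/-- For every nonzero f ∈ R(F_q,n), with gcd(n,q) = 1, the dimension of the cyclic code
C(f) equals the Hamming weight of the Mattson–Solomon vector of the degree-< n
representative of f. -/
theorem dim_eq_wt_msVec (q n : ℕ) (F : Type*) [Field F] [Fintype F]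
    (hq : Fintype.card F = q) (hn : 1 ≤ n) (hcop : Nat.Coprime n q)
    (ζ : AlgebraicClosure F) (hζ : IsPrimitiveRoot ζ n)
    (f : CycRing F n) (hf : f ≠ 0) :
    cycDim F (Ideal.span {f}) = wt (msVecPoly n ζ (cycRep f)) := by
  classical
  have hn0 : n ≠ 0 := by omega
  haveI : NeZero n := ⟨hn0⟩
  set P : F[X] := X ^ n - C (1 : F) with hPdef
  have hPm : P.Monic := monic_X_pow_sub_C 1 hn0
  have hP0 : P ≠ 0 := hPm.ne_zero
  have hPdeg : P.natDegree = n := by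
    rw [hPdef]; exact natDegree_X_pow_sub_C
  set p : F[X] := cycRep f with hpdef
  have hpf : AdjoinRoot.mk P p = f := by
    have : p = AdjoinRoot.modByMonicHom hPm f := by
      simp only [hpdef, cycRep, dif_neg hn0]
    rw [this]
    exact AdjoinRoot.mk_leftInverse hPm f
  have hp0 : p ≠ 0 := fun h => hf (by rw [← hpf, h, map_zero])
  set g : F[X] := EuclideanDomain.gcd p P with hgdef
  have hgp : g ∣ p := EuclideanDomain.gcd_dvd_left p P
  have hgP : g ∣ P := EuclideanDomain.gcd_dvd_right p P
  have hg0 : g ≠ 0 := by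
    intro h
    rw [h] at hgP
    exact hP0 (zero_dvd_iff.mp hgP)
  have hgdeg : g.natDegree ≤ n := hPdeg ▸ Polynomial.natDegree_le_of_dvd hgP hP0
  -- (n : F) ≠ 0, hence X^n - 1 is separable
  have hnF : (n : F) ≠ 0 := by
    intro h
    set r := ringChar F with hr
    haveI : CharP F r := ringChar.charP F
    obtain ⟨m, hrp, hcard⟩ := FiniteField.card F r
    have hrn : r ∣ n := (CharP.cast_eq_zero_iff F r n).mp h
    have hrq : r ∣ q := by
      rw [← hq, hcard]
      exact dvd_pow_self r m.ne_zero
    have : r ∣ 1 := hcop ▸ Nat.dvd_gcd hrn hrq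
    exact hrp.one_lt.ne' (Nat.eq_one_of_dvd_one this) |>.elim
  have hPsep : P.Separable := separable_X_pow_sub_C (1 : F) hnF one_ne_zero
  have hgsep : g.Separable := hPsep.of_dvd hgP
  -- Step 1: the ideal span {f} equals span {mk P g}
  have hspan : Ideal.span {f} = Ideal.span {AdjoinRoot.mk P g} := by
    apply le_antisymm
    · rw [Ideal.span_singleton_le_span_singleton]
      obtain ⟨c, hc⟩ := hgp
      exact ⟨AdjoinRoot.mk P c, by rw [← hpf, hc, map_mul]⟩
    · rw [Ideal.span_singleton_le_span_singleton]
      refine ⟨AdjoinRoot.mk P (EuclideanDomain.gcdA p P), ?_⟩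
      have := EuclideanDomain.gcd_eq_gcd_ab p P
      calc AdjoinRoot.mk P g
          = AdjoinRoot.mk P (p * EuclideanDomain.gcdA p P + P * EuclideanDomain.gcdB p P) := by
            rw [hgdef, ← this]
        _ = f * AdjoinRoot.mk P (EuclideanDomain.gcdA p P) := by
            rw [map_add, map_mul, map_mul, AdjoinRoot.mk_self, zero_mul, add_zero, hpf]
  -- Step 2: dimension computation
  haveI : Module.Finite F (CycRing F n) :=
    Module.Finite.of_basis (AdjoinRoot.powerBasis hP0).basis
  have hfr : Module.finrank F (CycRing F n) = n := by
    rw [(AdjoinRoot.powerBasis hP0).finrank, AdjoinRoot.powerBasis_dim, hPdeg]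
  set J : Ideal (CycRing F n) := Ideal.span {AdjoinRoot.mk P g} with hJ
  have hIJ : Ideal.span {P} ≤ Ideal.span {g} := by
    rw [Ideal.span_singleton_le_span_singleton]; exact hgP
  have hmap : Ideal.map (Ideal.Quotient.mkₐ F (Ideal.span {P})) (Ideal.span {g}) = J := by
    rw [Ideal.map_span, Set.image_singleton, hJ]
    rfl
  have hquot : Module.finrank F (CycRing F n ⧸ J) = g.natDegree := by
    have e1 : (CycRing F n ⧸ J) ≃ₐ[F] F[X] ⧸ Ideal.span {g} := by
      rw [← hmap]
      exact DoubleQuot.quotQuotEquivQuotOfLEₐ F hIJ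
    have e2 : Module.finrank F (AdjoinRoot g) = g.natDegree := by
      rw [(AdjoinRoot.powerBasis hg0).finrank, AdjoinRoot.powerBasis_dim]
    exact e1.toLinearEquiv.finrank_eq.trans e2
  have hdim : cycDim F (Ideal.span {f}) = n - g.natDegree := by
    rw [hspan]
    have h1 : Module.finrank F (CycRing F n ⧸ (J.restrictScalars F))
        + Module.finrank F (J.restrictScalars F) = n := by
      rw [Submodule.finrank_quotient_add_finrank (J.restrictScalars F), hfr]
    have h2 : Module.finrank F (CycRing F n ⧸ (J.restrictScalars F))
        = Module.finrank F (CycRing F n ⧸ J) :=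
      (Submodule.Quotient.restrictScalarsEquiv F J).finrank_eq
    show Module.finrank F (J.restrictScalars F) = n - g.natDegree
    omega
  -- Step 3: weight computation
  set e : Fin n → AlgebraicClosure F := fun j => ζ ^ ((j : ℕ) + 1) with he
  have hζ0 : ζ ≠ 0 := by
    intro h
    have := hζ.pow_eq_one
    rw [h, zero_pow hn0] at this
    exact zero_ne_one this
  have hePn : ∀ j : Fin n, (e j) ^ n = 1 := by
    intro j
    rw [he]
    simp only
    rw [← pow_mul, mul_comm, pow_mul, hζ.pow_eq_one, one_pow]
  have heP : ∀ j : Fin n, aeval (e j) P = 0 := by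
    intro j
    simp [hPdef, hePn j]
  have hiff : ∀ j : Fin n, aeval (e j) p = 0 ↔ aeval (e j) g = 0 := by
    intro j
    constructor
    · intro h
      have := EuclideanDomain.gcd_eq_gcd_ab p P
      rw [hgdef, this, map_add, map_mul, map_mul, h, heP j, zero_mul, zero_mul, add_zero]
    · intro h
      obtain ⟨c, hc⟩ := hgp
      rw [hc, map_mul, h, zero_mul]
  have hinj : Function.Injective e := by
    intro a b hab
    have hab' : ζ ^ ((a : ℕ) + 1) = ζ ^ ((b : ℕ) + 1) := hab
    rw [pow_succ, pow_succ] at hab'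
    have : ζ ^ (a : ℕ) = ζ ^ (b : ℕ) := mul_right_cancel₀ hζ0 hab'
    exact Fin.ext (hζ.pow_inj a.isLt b.isLt this)
  set Z : Set (Fin n) := {j | aeval (e j) g = 0} with hZ
  have himg : e '' Z = g.rootSet (AlgebraicClosure F) := by
    ext x
    simp only [Set.mem_image, Polynomial.mem_rootSet, hZ, Set.mem_setOf_eq]
    constructor
    · rintro ⟨j, hj, rfl⟩
      exact ⟨hg0, hj⟩
    · rintro ⟨-, hx⟩
      have hxP : aeval x P = 0 := by
        obtain ⟨c, hc⟩ := hgP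
        rw [hc, map_mul, hx, zero_mul]
      have hxn : x ^ n = 1 := by
        have : x ^ n - 1 = 0 := by simpa [hPdef] using hxP
        linear_combination this
      obtain ⟨i, hi, hix⟩ := hζ.eq_pow_of_pow_eq_one hxn
      rcases Nat.eq_zero_or_pos i with hi0 | hi0
      · refine ⟨⟨n - 1, by omega⟩, ?_, ?_⟩
        · have hex : e ⟨n - 1, by omega⟩ = x := by
            rw [he]
            simp only
            rw [Nat.sub_add_cancel hn, hζ.pow_eq_one, ← hix, hi0, pow_zero]
          rw [hex]; exact hx
        · rw [he]
          simp only
          rw [Nat.sub_add_cancel hn, hζ.pow_eq_one, ← hix, hi0, pow_zero]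
      · refine ⟨⟨i - 1, by omega⟩, ?_, ?_⟩
        · have hex : e ⟨i - 1, by omega⟩ = x := by
            rw [he]
            simp only
            rw [Nat.sub_add_cancel hi0, hix]
          rw [hex]; exact hx
        · rw [he]
          simp only
          rw [Nat.sub_add_cancel hi0, hix]
  have hcardZ : Z.ncard = g.natDegree := by
    have h1 : Z.ncard = (e '' Z).ncard := (Set.ncard_image_of_injective Z hinj).symm
    rw [h1, himg]
    have : (g.rootSet (AlgebraicClosure F)).ncard = Fintype.card (g.rootSet (AlgebraicClosure F)) := by
      rw [← Nat.card_coe_set_eq, Nat.card_eq_fintype_card]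
    rw [this]
    exact Polynomial.card_rootSet_eq_natDegree hgsep (IsAlgClosed.splits _)
  have hwt : wt (msVecPoly n ζ p) = n - g.natDegree := by
    have hset : {i | msVecPoly n ζ p i ≠ 0} = Zᶜ := by
      ext j
      simp only [Set.mem_setOf_eq, Set.mem_compl_iff, hZ, msVecPoly]
      rw [← hiff j]
    rw [wt, hset]
    have := Set.ncard_add_ncard_compl Z
    rw [hcardZ, Nat.card_eq_fintype_card, Fintype.card_fin] at this
    omega
  rw [hdim, hwt]
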